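/- Let S be a supercharacter theory of a finite group G and let g, h ∈ G. Then ∑_{χ ∈ BCh(S)} χ(g)·conj(χ(h)) / χ(1) equals |G| / |cl_S(g)| if h ∈ cl_S(g), and equals 0 otherwise. -/

import Mathlib

open scoped Classical

noncomputable section

/-- The set of irreducible complex characters of `G`, as functions `G → ℂ`. -/
def Irr (G : Type) [Group G] : Set (G → ℂ) :=
  {χ | ∃ V : FDRep ℂ G, CategoryTheory.Simple V ∧ χ = fun g => V.character g}

section Aux
open Module LinearMap


lemma trace_inv_eq_conj {V : Type} [AddCommGroup V] [Module ℂ V] [FiniteDimensional ℂ V]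
    (f f' : Module.End ℂ V) (k : ℕ) (hk : 0 < k) (hfk : f ^ k = 1)
    (h1 : f' * f = 1) (h2 : f * f' = 1) :
    LinearMap.trace ℂ V f' = (starRingEnd ℂ) (LinearMap.trace ℂ V f) := by
  have hsf : Squarefree (Polynomial.X ^ k - 1 : Polynomial ℂ) := by
    have := Polynomial.separable_X_pow_sub_C (F := ℂ) (1 : ℂ)
      (by exact_mod_cast Nat.cast_ne_zero.mpr hk.ne') one_ne_zero
    simpa using this.squarefree
  have hss : f.IsSemisimple := by
    apply Module.End.isSemisimple_of_squarefree_aeval_eq_zero hsf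
    simp [hfk]
  set N : ℂ → Submodule ℂ V := f.eigenspace with hN
  have hsup : ⨆ μ, N μ = ⊤ := by
    have ha := Module.End.iSup_maxGenEigenspace_eq_top f
    have hb := fun μ => hss.isFinitelySemisimple.maxGenEigenspace_eq_eigenspace μ
    simpa [hN, ← hb] using ha
  have hInd : iSupIndep N := f.eigenspaces_iSupIndep
  have hInt : DirectSum.IsInternal N :=
    DirectSum.isInternal_submodule_of_iSupIndep_of_iSup_eq_top hInd hsup
  have hNfin : {μ | N μ ≠ ⊥}.Finite := WellFoundedGT.finite_ne_bot_of_iSupIndep hInd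
  have hfv : ∀ {μ : ℂ} {v : V}, v ∈ N μ → f v = μ • v := fun hv =>
    Module.End.mem_eigenspace_iff.mp hv
  have key : ∀ {μ : ℂ} {v : V}, v ∈ N μ → v = μ • f' v := by
    intro μ v hv
    have h3 : f' (f v) = f' (μ • v) := by rw [hfv hv]
    have h4 : f' (f v) = v := by
      have := congrArg (fun (g : Module.End ℂ V) => g v) h1
      simpa using this
    rw [h4, map_smul] at h3
    exact h3
  have hmf : ∀ μ : ℂ, Set.MapsTo f (N μ) (N μ) := by
    intro μ v hv
    exact Module.End.mem_eigenspace_iff.mpr (by rw [hfv hv, map_smul, hfv hv])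
  have hmf' : ∀ μ : ℂ, Set.MapsTo f' (N μ) (N μ) := by
    intro μ v hv
    refine Module.End.mem_eigenspace_iff.mpr ?_
    have h4 : f (f' v) = v := by
      have := congrArg (fun (g : Module.End ℂ V) => g v) h2
      simpa using this
    rw [h4]
    exact key hv
  -- eigenvalues with nonzero eigenspace are k-th roots of unity
  have hroot : ∀ μ ∈ hNfin.toFinset, μ ^ k = 1 := by
    intro μ hμ
    rw [Set.Finite.mem_toFinset] at hμ
    obtain ⟨v, hv, hv0⟩ := Submodule.exists_mem_ne_zero_of_ne_bot hμ
    have hev : f.HasEigenvector μ v := ⟨hv, hv0⟩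
    have := hev.pow_apply k
    rw [hfk] at this
    simp only [Module.End.one_apply] at this
    have h5 : (μ ^ k - 1) • v = 0 := by rw [sub_smul, one_smul, ← this, sub_self]
    rcases smul_eq_zero.mp h5 with h | h
    · exact sub_eq_zero.mp h
    · exact absurd h hv0
  have hμ0 : ∀ μ ∈ hNfin.toFinset, μ ≠ 0 := by
    intro μ hμ h0
    have := hroot μ hμ
    rw [h0, zero_pow hk.ne'] at this
    exact zero_ne_one this
  have htr : ∀ (gm : Module.End ℂ V) (hg : ∀ μ : ℂ, Set.MapsTo gm (N μ) (N μ))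
      (c : ℂ → ℂ), (∀ μ ∈ hNfin.toFinset, ∀ v ∈ N μ, gm v = c μ • v) →
      LinearMap.trace ℂ V gm = ∑ μ ∈ hNfin.toFinset, c μ * (finrank ℂ (N μ) : ℂ) := by
    intro gm hg c hc
    rw [LinearMap.trace_eq_sum_trace_restrict' hInt hNfin hg]
    refine Finset.sum_congr rfl fun μ hμ => ?_
    have hres : gm.restrict (hg μ) = (c μ) • (LinearMap.id : N μ →ₗ[ℂ] N μ) := by
      ext v
      have := hc μ hμ v.1 v.2
      exact this
    rw [hres, map_smul, LinearMap.trace_id]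
    simp [mul_comm]
  have htf : LinearMap.trace ℂ V f = ∑ μ ∈ hNfin.toFinset, μ * (finrank ℂ (N μ) : ℂ) :=
    htr f hmf _root_.id (fun μ _ v hv => hfv hv)
  have htf' : LinearMap.trace ℂ V f' =
      ∑ μ ∈ hNfin.toFinset, μ⁻¹ * (finrank ℂ (N μ) : ℂ) := by
    refine htr f' hmf' (fun μ => μ⁻¹) ?_
    intro μ hμ v hv
    have hk0 := hμ0 μ hμ
    have h7 : μ⁻¹ • v = μ⁻¹ • (μ • f' v) := by rw [← key hv]
    rw [h7, smul_smul, inv_mul_cancel₀ hk0, one_smul]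
  rw [htf, htf', map_sum]
  refine Finset.sum_congr rfl fun μ hμ => ?_
  rw [map_mul]
  have habs : ‖μ‖ = 1 := Complex.norm_eq_one_of_pow_eq_one (hroot μ hμ) hk.ne'
  rw [← Complex.inv_eq_conj habs]
  congr 1
  simp

lemma FDRep.char_inv_eq_conj {G : Type} [Group G] [Fintype G] (V : FDRep ℂ G) (g : G) :
    V.character g⁻¹ = (starRingEnd ℂ) (V.character g) := by
  have hk : 0 < orderOf g := orderOf_pos g
  have hf : (V.ρ g) ^ orderOf g = 1 := by rw [← map_pow, pow_orderOf_eq_one, map_one]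
  have h1 : V.ρ g⁻¹ * V.ρ g = 1 := by rw [← map_mul, inv_mul_cancel, map_one]
  have h2 : V.ρ g * V.ρ g⁻¹ = 1 := by rw [← map_mul, mul_inv_cancel, map_one]
  exact trace_inv_eq_conj (V.ρ g) (V.ρ g⁻¹) (orderOf g) hk hf h1 h2

lemma irr_ortho {G : Type} [Group G] [Fintype G] {χ φ : G → ℂ}
    (hχ : χ ∈ Irr G) (hφ : φ ∈ Irr G) :
    ∑ g : G, χ g * (starRingEnd ℂ) (φ g) = if χ = φ then (Fintype.card G : ℂ) else 0 := by
  classical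
  obtain ⟨V, hV, rfl⟩ := hχ
  obtain ⟨W, hW, rfl⟩ := hφ
  haveI := hV
  haveI := hW
  haveI : Invertible (Fintype.card G : ℂ) :=
    invertibleOfNonzero (Nat.cast_ne_zero.mpr Fintype.card_ne_zero)
  have key : ∀ (A B : FDRep ℂ G) , CategoryTheory.Simple A → CategoryTheory.Simple B →
      ∑ g : G, A.character g * B.character g⁻¹ =
        if Nonempty (A ≅ B) then (Fintype.card G : ℂ) else 0 := by
    intro A B hA hB
    haveI := hA; haveI := hB
    letI : Invertible ((Nat.card G) : ℂ) := invertibleOfNonzero (Nat.cast_ne_zero.mpr Nat.card_pos.ne')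
    have h0 := FDRep.char_orthonormal (k := ℂ) A B
    have h : (⅟ (Fintype.card G : ℂ)) • ∑ g : G, A.character g * B.character g⁻¹ =
        if Nonempty (A ≅ B) then (1 : ℂ) else 0 := by
      rw [invOf_eq_inv, smul_eq_mul, ← Nat.card_eq_fintype_card]; exact h0
    rw [invOf_smul_eq_iff] at h
    rw [h]
    split <;> simp
  by_cases hEq : (fun g => V.character g) = (fun g => W.character g)
  · rw [if_pos hEq]
    have := key V V hV hV
    simp only [hEq] at this ⊢
    rw [if_pos ⟨CategoryTheory.Iso.refl V⟩] at this
    calc ∑ g : G, W.character g * (starRingEnd ℂ) (W.character g)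
        = ∑ g : G, W.character g * W.character g⁻¹ := by
          refine Finset.sum_congr rfl fun g _ => ?_
          rw [FDRep.char_inv_eq_conj]
      _ = Fintype.card G := by
          have h2 := key W W hW hW
          rw [if_pos ⟨CategoryTheory.Iso.refl W⟩] at h2
          exact h2
  · rw [if_neg hEq]
    have hni : ¬ Nonempty (V ≅ W) := by
      rintro ⟨i⟩
      exact hEq (by rw [show V.character = W.character from FDRep.char_iso i])
    have := key V W hV hW
    rw [if_neg hni] at this
    rw [← this]
    refine Finset.sum_congr rfl fun g _ => ?_
    rw [FDRep.char_inv_eq_conj]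

lemma irr_linearIndependent (G : Type) [Group G] [Fintype G] :
    LinearIndependent ℂ (fun χ : ↥(Irr G) => (χ : G → ℂ)) := by
  classical
  rw [linearIndependent_iff']
  intro s gc hsum i hi
  have hcard : (Fintype.card G : ℂ) ≠ 0 := Nat.cast_ne_zero.mpr Fintype.card_ne_zero
  have h0 : ∑ a : G, (∑ j ∈ s, gc j • ((j : ↥(Irr G)) : G → ℂ)) a
      * (starRingEnd ℂ) ((i : G → ℂ) a) = 0 := by
    rw [hsum]; simp
  have h1 : ∑ a : G, (∑ j ∈ s, gc j • ((j : ↥(Irr G)) : G → ℂ)) a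
      * (starRingEnd ℂ) ((i : G → ℂ) a)
      = ∑ j ∈ s, gc j * ∑ a : G, (j : G → ℂ) a * (starRingEnd ℂ) ((i : G → ℂ) a) := by
    have hpt : ∀ a : G, (∑ j ∈ s, gc j • ((j : ↥(Irr G)) : G → ℂ)) a
        * (starRingEnd ℂ) ((i : G → ℂ) a)
        = ∑ j ∈ s, gc j * ((j : G → ℂ) a * (starRingEnd ℂ) ((i : G → ℂ) a)) := by
      intro a
      rw [Finset.sum_apply, Finset.sum_mul]
      exact Finset.sum_congr rfl fun j _ => by simp [mul_assoc]
    simp_rw [hpt]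
    rw [Finset.sum_comm]
    exact Finset.sum_congr rfl fun j _ => by rw [Finset.mul_sum]
  rw [h1] at h0
  have h2 : ∀ j ∈ s, gc j * ∑ a : G, (j : G → ℂ) a * (starRingEnd ℂ) ((i : G → ℂ) a)
      = if j = i then gc j * (Fintype.card G : ℂ) else 0 := by
    intro j _
    rw [irr_ortho j.2 i.2]
    by_cases hji : j = i
    · simp [hji]
    · have hne : ((j : ↥(Irr G)) : G → ℂ) ≠ ((i : ↥(Irr G)) : G → ℂ) := by
        simpa [Subtype.coe_inj] using hji
      simp [hne, hji]
  rw [Finset.sum_congr rfl h2, Finset.sum_ite_eq' s i (fun j => gc j * _), if_pos hi] at h0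
  exact (mul_eq_zero.mp h0).resolve_right hcard

lemma irr_finite (G : Type) [Group G] [Fintype G] : (Irr G).Finite :=
  (irr_linearIndependent G).setFinite

lemma irr_one_pos {G : Type} [Group G] [Fintype G] {χ : G → ℂ} (hχ : χ ∈ Irr G) :
    ∃ n : ℕ, 0 < n ∧ χ 1 = (n : ℂ) := by
  obtain ⟨V, hV, rfl⟩ := hχ
  haveI := hV
  refine ⟨Module.finrank ℂ V, ?_, by simpa using FDRep.char_one V⟩
  rw [Nat.pos_iff_ne_zero]
  intro h0
  haveI : Subsingleton V := Module.finrank_zero_iff.mp h0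
  have hz : (fun g => V.character g) = 0 := by
    funext g
    have hg : V.ρ g = 0 := Subsingleton.elim _ _
    simp [FDRep.character, hg]
  have h := irr_ortho (χ := fun g => V.character g) (φ := fun g => V.character g)
    ⟨V, hV, rfl⟩ ⟨V, hV, rfl⟩
  rw [if_pos rfl] at h
  simp only [fun g => (congrFun hz g : V.character g = 0)] at h
  simp at h
  exact (Nat.cast_ne_zero.mpr (Fintype.card_ne_zero : Fintype.card G ≠ 0)) h.symm

end Aux

/-- For a set `X` of characters, `σ_X = ∑_{ψ ∈ X} ψ(1)·ψ`. -/
def sigmaChar {G : Type} [Group G] (X : Set (G → ℂ)) : G → ℂ :=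
  fun g => ∑ᶠ ψ ∈ X, ψ 1 * ψ g

/-- A supercharacter theory of a finite group `G`: a partition `parts` of `Irr G`
together with a partition `classes` of `G` such that `{1}` is a part,
the two partitions have the same number of parts, and each `σ_X` for `X ∈ parts`
is constant on each part of `classes`. -/
structure SuperCharTheory (G : Type) [Group G] [Fintype G] where
  parts : Set (Set (G → ℂ))
  classes : Set (Set G)
  parts_nonempty : ∀ X ∈ parts, X.Nonempty
  parts_disjoint : parts.PairwiseDisjoint id
  parts_cover : ⋃₀ parts = Irr G
  classes_nonempty : ∀ K ∈ classes, K.Nonempty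
  classes_disjoint : classes.PairwiseDisjoint id
  classes_cover : ⋃₀ classes = Set.univ
  one_mem : ({1} : Set G) ∈ classes
  card_eq : parts.ncard = classes.ncard
  sigma_const : ∀ X ∈ parts, ∀ K ∈ classes, ∀ g ∈ K, ∀ h ∈ K,
    sigmaChar X g = sigmaChar X h


section SCT
variable {G : Type} [Group G] [Fintype G] (S : SuperCharTheory G)

lemma parts_subset_irr {X : Set (G → ℂ)} (hX : X ∈ S.parts) : X ⊆ Irr G :=
  S.parts_cover ▸ Set.subset_sUnion_of_mem hX

lemma parts_finite {X : Set (G → ℂ)} (hX : X ∈ S.parts) : X.Finite :=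
  (irr_finite G).subset (parts_subset_irr S hX)

lemma sigmaChar_eq_sum {X : Set (G → ℂ)} (hX : X.Finite) (g : G) :
    sigmaChar X g = ∑ ψ ∈ hX.toFinset, ψ 1 * ψ g :=
  finsum_mem_eq_finite_toFinset_sum _ hX

/-- dimension function -/
def dimOf {G : Type} [Group G] [Fintype G] (ψ : G → ℂ) : ℕ :=
  if h : ψ ∈ Irr G then (irr_one_pos h).choose else 0

lemma dimOf_spec {ψ : G → ℂ} (h : ψ ∈ Irr G) : 0 < dimOf ψ ∧ ψ 1 = (dimOf ψ : ℂ) := by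
  rw [dimOf, dif_pos h]
  exact ⟨(irr_one_pos h).choose_spec.1, (irr_one_pos h).choose_spec.2⟩

lemma sigma_one_nat {X : Set (G → ℂ)} (hX : X ∈ S.parts) :
    ∃ n : ℕ, 0 < n ∧ sigmaChar X 1 = (n : ℂ) := by
  classical
  have hXf := parts_finite S hX
  have hsub := parts_subset_irr S hX
  refine ⟨∑ ψ ∈ hXf.toFinset, dimOf ψ * dimOf ψ, ?_, ?_⟩
  · obtain ⟨ψ₀, hψ₀⟩ := S.parts_nonempty X hX
    refine Finset.sum_pos' (fun ψ _ => Nat.zero_le _) ⟨ψ₀, hXf.mem_toFinset.mpr hψ₀, ?_⟩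
    have := (dimOf_spec (hsub hψ₀)).1
    positivity
  · rw [sigmaChar_eq_sum hXf 1, Nat.cast_sum]
    refine Finset.sum_congr rfl fun ψ hψ => ?_
    rw [(dimOf_spec (hsub (hXf.mem_toFinset.mp hψ))).2]
    push_cast
    ring

lemma sigma_one_ne {X : Set (G → ℂ)} (hX : X ∈ S.parts) : sigmaChar X 1 ≠ 0 := by
  obtain ⟨n, hn, h⟩ := sigma_one_nat S hX
  rw [h]
  exact_mod_cast hn.ne'

lemma conj_irr_one {ψ : G → ℂ} (h : ψ ∈ Irr G) : (starRingEnd ℂ) (ψ 1) = ψ 1 := by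
  obtain ⟨n, _, he⟩ := irr_one_pos h
  rw [he]
  simp

lemma row_ortho {X Y : Set (G → ℂ)} (hX : X ∈ S.parts) (hY : Y ∈ S.parts) :
    ∑ a : G, sigmaChar X a * (starRingEnd ℂ) (sigmaChar Y a)
      = if X = Y then (Fintype.card G : ℂ) * sigmaChar X 1 else 0 := by
  classical
  have hXf := parts_finite S hX
  have hYf := parts_finite S hY
  have hXsub := parts_subset_irr S hX
  have hYsub := parts_subset_irr S hY
  have expand : ∑ a : G, sigmaChar X a * (starRingEnd ℂ) (sigmaChar Y a)
      = ∑ ψ ∈ hXf.toFinset, ∑ φ ∈ hYf.toFinset,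
          (ψ 1 * (starRingEnd ℂ) (φ 1)) * ∑ a : G, ψ a * (starRingEnd ℂ) (φ a) := by
    have hpt : ∀ a : G, sigmaChar X a * (starRingEnd ℂ) (sigmaChar Y a)
        = ∑ ψ ∈ hXf.toFinset, ∑ φ ∈ hYf.toFinset,
            (ψ 1 * (starRingEnd ℂ) (φ 1)) * (ψ a * (starRingEnd ℂ) (φ a)) := by
      intro a
      rw [sigmaChar_eq_sum hXf a, sigmaChar_eq_sum hYf a, map_sum, Finset.sum_mul_sum]
      refine Finset.sum_congr rfl fun ψ _ => Finset.sum_congr rfl fun φ _ => ?_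
      rw [map_mul]
      ring
    simp_rw [hpt, Finset.mul_sum]
    rw [Finset.sum_comm]
    refine Finset.sum_congr rfl fun ψ _ => ?_
    rw [Finset.sum_comm]
  rw [expand]
  by_cases hXY : X = Y
  · subst hXY
    rw [if_pos rfl]
    have hterm : ∀ ψ ∈ hXf.toFinset,
        (∑ φ ∈ hXf.toFinset, (ψ 1 * (starRingEnd ℂ) (φ 1))
          * ∑ a : G, ψ a * (starRingEnd ℂ) (φ a))
        = (Fintype.card G : ℂ) * (ψ 1 * ψ 1) := by
      intro ψ hψ
      have h1 : ∀ φ ∈ hXf.toFinset, (ψ 1 * (starRingEnd ℂ) (φ 1))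
          * (∑ a : G, ψ a * (starRingEnd ℂ) (φ a))
          = if ψ = φ then (ψ 1 * (starRingEnd ℂ) (φ 1)) * (Fintype.card G : ℂ) else 0 := by
        intro φ hφ
        rw [irr_ortho (hXsub (hXf.mem_toFinset.mp hψ)) (hXsub (hXf.mem_toFinset.mp hφ))]
        by_cases h : ψ = φ
        · rw [if_pos h, if_pos h]
        · rw [if_neg h, if_neg h, mul_zero]
      rw [Finset.sum_congr rfl h1, Finset.sum_ite_eq hXf.toFinset ψ
        (fun φ => (ψ 1 * (starRingEnd ℂ) (φ 1)) * (Fintype.card G : ℂ)), if_pos hψ,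
        conj_irr_one (hXsub (hXf.mem_toFinset.mp hψ))]
      ring
    rw [Finset.sum_congr rfl hterm, ← Finset.mul_sum, sigmaChar_eq_sum hXf 1]
  · rw [if_neg hXY]
    have hdisj : Disjoint X Y := S.parts_disjoint hX hY hXY
    refine Finset.sum_eq_zero fun ψ hψ => Finset.sum_eq_zero fun φ hφ => ?_
    have hne : ψ ≠ φ := fun he =>
      Set.disjoint_left.mp hdisj (hXf.mem_toFinset.mp hψ) (he ▸ hYf.mem_toFinset.mp hφ)
    rw [irr_ortho (hXsub (hXf.mem_toFinset.mp hψ)) (hYsub (hYf.mem_toFinset.mp hφ)),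
      if_neg hne, mul_zero]

lemma sigma_injOn : Set.InjOn sigmaChar S.parts := by
  intro X hX Y hY hσ
  by_contra hne
  have h1 := row_ortho S hX hY
  rw [if_neg hne, hσ] at h1
  have h2 := row_ortho S hY hY
  rw [if_pos rfl, h1] at h2
  exact (mul_ne_zero (Nat.cast_ne_zero.mpr Fintype.card_ne_zero) (sigma_one_ne S hY)) h2.symm

/-- representative of a class -/
def repOf {G : Type} [Group G] (K : Set G) : G :=
  if h : K.Nonempty then h.choose else 1

lemma repOf_mem {K : Set G} (h : K.Nonempty) : repOf K ∈ K := by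
  rw [repOf, dif_pos h]
  exact h.choose_spec

lemma sum_classes (F : G → ℂ) :
    ∑ a : G, F a = ∑ K ∈ (Set.toFinite S.classes).toFinset, ∑ a ∈ K.toFinset, F a := by
  classical
  have hU : (Finset.univ : Finset G)
      = (Set.toFinite S.classes).toFinset.biUnion (fun K => K.toFinset) := by
    ext a
    simp only [Finset.mem_univ, true_iff, Finset.mem_biUnion, Set.Finite.mem_toFinset,
      Set.mem_toFinset]
    have ha : a ∈ ⋃₀ S.classes := by rw [S.classes_cover]; trivial
    obtain ⟨K, hK, haK⟩ := ha
    exact ⟨K, hK, haK⟩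
  rw [hU, Finset.sum_biUnion]
  intro K hK K' hK' hne
  have hdisj : Disjoint K K' := S.classes_disjoint ((Set.Finite.mem_toFinset _).mp hK)
    ((Set.Finite.mem_toFinset _).mp hK') hne
  simp only [Finset.disjoint_left, Set.mem_toFinset]
  exact fun a ha ha' => Set.disjoint_left.mp hdisj ha ha'

lemma row_ortho' {X Y : Set (G → ℂ)} (hX : X ∈ S.parts) (hY : Y ∈ S.parts) :
    ∑ K ∈ (Set.toFinite S.classes).toFinset, (K.ncard : ℂ) *
        (sigmaChar X (repOf K) * (starRingEnd ℂ) (sigmaChar Y (repOf K)))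
      = if X = Y then (Fintype.card G : ℂ) * sigmaChar X 1 else 0 := by
  classical
  rw [← row_ortho S hX hY, sum_classes S _]
  refine Finset.sum_congr rfl fun K hK => ?_
  have hKmem : K ∈ S.classes := (Set.Finite.mem_toFinset _).mp hK
  have hKne := S.classes_nonempty K hKmem
  have hconst : ∀ a ∈ K.toFinset, sigmaChar X a * (starRingEnd ℂ) (sigmaChar Y a)
      = sigmaChar X (repOf K) * (starRingEnd ℂ) (sigmaChar Y (repOf K)) := by
    intro a ha
    rw [Set.mem_toFinset] at ha
    rw [S.sigma_const X hX K hKmem a ha (repOf K) (repOf_mem hKne),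
        S.sigma_const Y hY K hKmem a ha (repOf K) (repOf_mem hKne)]
  rw [Finset.sum_congr rfl hconst, Finset.sum_const, Set.ncard_eq_toFinset_card']
  rw [nsmul_eq_mul]

end SCT

/-- The set of basic `S`-characters (supercharacters) of a supercharacter theory. -/
def BCh {G : Type} [Group G] [Fintype G] (S : SuperCharTheory G) : Set (G → ℂ) :=
  sigmaChar '' S.parts

/-- The superclass sum `K̂ = ∑_{g ∈ K} g` in the complex group algebra. -/
def classSum {G : Type} [Group G] (K : Set G) : MonoidAlgebra ℂ G :=
  ∑ᶠ g ∈ K, MonoidAlgebra.of ℂ G g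

/-- **Column orthogonality for supercharacters.** For `g` in the `S`-class `K` and any
`h ∈ G`, `∑_{χ ∈ BCh(S)} χ(g)·conj(χ(h))/χ(1)` equals `|G|/|cl_S(g)|` if
`h ∈ cl_S(g) = K`, and `0` otherwise. -/
theorem supercharacter_column_orthogonality {G : Type} [Group G] [Fintype G]
    (S : SuperCharTheory G)
    (K : Set G) (hK : K ∈ S.classes) (g : G) (hg : g ∈ K) (h : G) :
    ∑ᶠ χ ∈ BCh S, χ g * (starRingEnd ℂ) (χ h) / χ 1
      = if h ∈ K then (Fintype.card G : ℂ) / (K.ncard : ℂ) else 0 := by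
  classical
  have hcardG : (Fintype.card G : ℂ) ≠ 0 := Nat.cast_ne_zero.mpr Fintype.card_ne_zero
  have hPfin : S.parts.Finite :=
    Set.Finite.subset (Set.Finite.finite_subsets (irr_finite G))
      (fun X hX => parts_subset_irr S hX)
  have hCfin : S.classes.Finite := Set.toFinite _
  set P' : Finset (Set (G → ℂ)) := hPfin.toFinset with hP'
  set C' : Finset (Set G) := hCfin.toFinset with hC'
  have hcard : Fintype.card ↥P' = Fintype.card ↥C' := by
    rw [Fintype.card_coe, Fintype.card_coe, ← Set.ncard_eq_toFinset_card S.parts hPfin,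
      ← Set.ncard_eq_toFinset_card S.classes hCfin]
    exact S.card_eq
  set e : ↥P' ≃ ↥C' := Fintype.equivOfCardEq hcard with he
  set Xof : ↥C' → Set (G → ℂ) := fun i => (e.symm i : Set (G → ℂ)) with hXofDef
  have hXof : ∀ i, Xof i ∈ S.parts := fun i => hPfin.mem_toFinset.mp (e.symm i).2
  have hXinj : Function.Injective Xof := by
    intro i j hij
    have : e.symm i = e.symm j := Subtype.ext hij
    exact e.symm.injective this
  have hσ1 : ∀ i, sigmaChar (Xof i) 1 ≠ 0 := fun i => sigma_one_ne S (hXof i)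
  set A : Matrix ↥C' ↥C' ℂ := fun i j => sigmaChar (Xof i) (repOf (j : Set G)) with hA
  set B : Matrix ↥C' ↥C' ℂ := fun j i => ((j : Set G).ncard : ℂ)
      * (starRingEnd ℂ) (sigmaChar (Xof i) (repOf (j : Set G)))
      / ((Fintype.card G : ℂ) * sigmaChar (Xof i) 1) with hB
  have hAB : A * B = 1 := by
    ext i i'
    rw [Matrix.mul_apply, Matrix.one_apply]
    have hterm : ∀ j : ↥C', A i j * B j i'
        = ((Fintype.card G : ℂ) * sigmaChar (Xof i') 1)⁻¹
          * ((((j : Set G).ncard : ℂ))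
            * (sigmaChar (Xof i) (repOf (j : Set G))
              * (starRingEnd ℂ) (sigmaChar (Xof i') (repOf (j : Set G))))) := by
      intro j
      rw [hA, hB]
      simp only [div_eq_mul_inv]
      ring
    rw [Finset.sum_congr rfl (fun j _ => hterm j), ← Finset.mul_sum]
    have hconv : ∑ j : ↥C', (((j : Set G).ncard : ℂ))
        * (sigmaChar (Xof i) (repOf (j : Set G))
          * (starRingEnd ℂ) (sigmaChar (Xof i') (repOf (j : Set G))))
        = ∑ Kc ∈ C', (Kc.ncard : ℂ)
          * (sigmaChar (Xof i) (repOf Kc) * (starRingEnd ℂ) (sigmaChar (Xof i') (repOf Kc))) :=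
      Finset.sum_coe_sort C' (fun Kc => (Kc.ncard : ℂ)
        * (sigmaChar (Xof i) (repOf Kc) * (starRingEnd ℂ) (sigmaChar (Xof i') (repOf Kc))))
    rw [hconv, row_ortho' S (hXof i) (hXof i')]
    by_cases hii : i = i'
    · subst hii
      rw [if_pos rfl, if_pos rfl, inv_mul_cancel₀ (mul_ne_zero hcardG (hσ1 i))]
    · rw [if_neg (fun hh => hii (hXinj hh)), if_neg hii, mul_zero]
  have hBA : B * A = 1 := mul_eq_one_comm.mp hAB
  -- set up the two class indices
  have hh' : h ∈ ⋃₀ S.classes := by rw [S.classes_cover]; trivial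
  obtain ⟨Kh, hKh, hhKh⟩ := hh'
  set j : ↥C' := ⟨Kh, hCfin.mem_toFinset.mpr hKh⟩ with hj
  set j' : ↥C' := ⟨K, hCfin.mem_toFinset.mpr hK⟩ with hj'
  have hKhne : (Kh.ncard : ℂ) ≠ 0 := by
    have : 0 < Kh.ncard := (Set.ncard_pos (Set.toFinite Kh)).mpr ⟨h, hhKh⟩
    exact_mod_cast this.ne'
  have hentry : ∑ i : ↥C', B j i * A i j' = if j = j' then 1 else 0 := by
    have := congrFun (congrFun hBA j) j'
    rwa [Matrix.mul_apply, Matrix.one_apply] at this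
  -- rewrite the finsum as a sum over ↥C'
  have hLHS : ∑ᶠ χ ∈ BCh S, χ g * (starRingEnd ℂ) (χ h) / χ 1
      = ∑ i : ↥C', sigmaChar (Xof i) g * (starRingEnd ℂ) (sigmaChar (Xof i) h)
          / sigmaChar (Xof i) 1 := by
    have h1 : ∑ᶠ χ ∈ BCh S, χ g * (starRingEnd ℂ) (χ h) / χ 1
        = ∑ᶠ X ∈ S.parts, sigmaChar X g * (starRingEnd ℂ) (sigmaChar X h) / sigmaChar X 1 := by
      rw [BCh]
      exact finsum_mem_image (sigma_injOn S)
    rw [h1, finsum_mem_eq_finite_toFinset_sum _ hPfin]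
    rw [← Finset.sum_coe_sort hPfin.toFinset
      (fun X => sigmaChar X g * (starRingEnd ℂ) (sigmaChar X h) / sigmaChar X 1)]
    exact (Equiv.sum_comp e.symm (fun p : ↥P' => sigmaChar (p : Set (G → ℂ)) g
      * (starRingEnd ℂ) (sigmaChar (p : Set (G → ℂ)) h) / sigmaChar (p : Set (G → ℂ)) 1)).symm
  -- replace g and h by representatives
  have hrepK : repOf K ∈ K := repOf_mem (S.classes_nonempty K hK)
  have hrepKh : repOf Kh ∈ Kh := repOf_mem (S.classes_nonempty Kh hKh)
  have hterm2 : ∀ i : ↥C', sigmaChar (Xof i) g * (starRingEnd ℂ) (sigmaChar (Xof i) h)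
      / sigmaChar (Xof i) 1
      = ((Fintype.card G : ℂ) / (Kh.ncard : ℂ)) * (B j i * A i j') := by
    intro i
    rw [hA, hB]
    have hg' : sigmaChar (Xof i) g = sigmaChar (Xof i) (repOf K) :=
      S.sigma_const _ (hXof i) K hK g hg (repOf K) hrepK
    have hh'' : sigmaChar (Xof i) h = sigmaChar (Xof i) (repOf Kh) :=
      S.sigma_const _ (hXof i) Kh hKh h hhKh (repOf Kh) hrepKh
    rw [hg', hh'']
    simp only [hj, hj']
    field_simp [hcardG, hKhne, hσ1 i]
  rw [hLHS, Finset.sum_congr rfl (fun i _ => hterm2 i), ← Finset.mul_sum, hentry]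
  by_cases hhK : h ∈ K
  · rw [if_pos hhK]
    have hKeq : Kh = K := by
      by_contra hne
      exact Set.disjoint_left.mp (S.classes_disjoint hKh hK hne) hhKh hhK
    rw [if_pos (by rw [hj, hj']; exact Subtype.ext hKeq), mul_one, hKeq]
  · rw [if_neg hhK]
    have hKne : Kh ≠ K := fun hEq => hhK (hEq ▸ hhKh)
    rw [if_neg (fun hEq => hKne (by simpa [hj, hj'] using congrArg Subtype.val hEq)), mul_zero]
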